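/- For integers d ≥ 2 and k ≥ 1, the automorphism group of the d-Fibonacci digraph F(d,k) is trivial: every bijection σ of the vertex set of F(d,k) onto itself such that there is an arc from x to y if and only if there is an arc from σ(x) to σ(y) is the identity map. -/
import Mathlib


/-- A vertex of the d-Fibonacci digraph F(d,k): a sequence x : Fin k → ZMod d
such that whenever a digit is nonzero, the next digit is its successor mod d. -/
def fibIsVertex (d k : ℕ) (x : Fin k → ZMod d) : Prop :=
  ∀ (i : ℕ) (h : i + 1 < k),
    x ⟨i, Nat.lt_of_succ_lt h⟩ ≠ 0 →
      x ⟨i + 1, h⟩ = x ⟨i, Nat.lt_of_succ_lt h⟩ + 1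

/-- The arc relation of F(d,k): y is the left shift of x, and if the last digit
of x is nonzero then the last digit of y is its successor mod d. -/
def fibArc (d k : ℕ) (x y : Fin k → ZMod d) : Prop :=
  (∀ (i : ℕ) (h : i + 1 < k), y ⟨i, Nat.lt_of_succ_lt h⟩ = x ⟨i + 1, h⟩) ∧
  (∀ h : 0 < k, x ⟨k - 1, Nat.sub_lt h Nat.one_pos⟩ ≠ 0 →
    y ⟨k - 1, Nat.sub_lt h Nat.one_pos⟩ = x ⟨k - 1, Nat.sub_lt h Nat.one_pos⟩ + 1)

namespace FibAux

variable {d k : ℕ}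

/-- append digit `t` after shifting left. -/
def app (x : Fin k → ZMod d) (t : ZMod d) : Fin k → ZMod d :=
  fun p => if h : p.1 + 1 < k then x ⟨p.1 + 1, h⟩ else t

lemma app_lt (x : Fin k → ZMod d) (t : ZMod d) {i : ℕ} (h : i + 1 < k) :
    app x t ⟨i, Nat.lt_of_succ_lt h⟩ = x ⟨i + 1, h⟩ := dif_pos h

lemma app_last (x : Fin k → ZMod d) (t : ZMod d) (h : 0 < k) :
    app x t ⟨k - 1, Nat.sub_lt h Nat.one_pos⟩ = t :=
  dif_neg (show ¬ (k - 1 + 1 < k) by omega)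

lemma fin_eq_last (hk : 0 < k) (p : Fin k) (hp : ¬ p.1 + 1 < k) :
    p = ⟨k - 1, Nat.sub_lt hk Nat.one_pos⟩ :=
  Fin.ext (by have h2 := p.2; show p.1 = k - 1; omega)

lemma app_vertex (hk : 0 < k) {x : Fin k → ZMod d} (hx : fibIsVertex d k x) {t : ZMod d}
    (ht : x ⟨k - 1, Nat.sub_lt hk Nat.one_pos⟩ ≠ 0 →
      t = x ⟨k - 1, Nat.sub_lt hk Nat.one_pos⟩ + 1) :
    fibIsVertex d k (app x t) := by
  intro i h hne
  rw [app_lt x t h] at hne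
  by_cases h2 : i + 1 + 1 < k
  · rw [app_lt x t h, show (⟨i+1, h⟩ : Fin k) = ⟨i+1, Nat.lt_of_succ_lt h2⟩ from rfl,
      app_lt x t h2]
    exact hx (i+1) h2 hne
  · have e : (⟨i + 1, h⟩ : Fin k) = ⟨k - 1, Nat.sub_lt hk Nat.one_pos⟩ :=
      Fin.ext (show i + 1 = k - 1 by omega)
    rw [app_lt x t h, e, app_last x t hk]
    rw [e] at hne
    exact ht hne

lemma arc_app (hk : 0 < k) (x : Fin k → ZMod d) {t : ZMod d}
    (ht : x ⟨k - 1, Nat.sub_lt hk Nat.one_pos⟩ ≠ 0 →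
      t = x ⟨k - 1, Nat.sub_lt hk Nat.one_pos⟩ + 1) :
    fibArc d k x (app x t) := by
  refine ⟨fun i h => app_lt x t h, fun h hne => ?_⟩
  rw [app_last x t h]
  exact (ht hne) ▸ rfl

/-- out-neighbors are unique when the last digit is nonzero -/
lemma out_unique (hk : 0 < k) {x y y' : Fin k → ZMod d}
    (hx : x ⟨k - 1, Nat.sub_lt hk Nat.one_pos⟩ ≠ 0)
    (h1 : fibArc d k x y) (h2 : fibArc d k x y') : y = y' := by
  funext p
  by_cases hp : p.1 + 1 < k
  · have e1 := h1.1 p.1 hp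
    have e2 := h2.1 p.1 hp
    have ep : p = ⟨p.1, Nat.lt_of_succ_lt hp⟩ := Fin.ext rfl
    rw [ep, e1, e2]
  · rw [fin_eq_last hk p hp, h1.2 hk hx, h2.2 hk hx]

end FibAux

/-- the automorphism group of F(d,k) is trivial. -/
theorem fib_aut_trivial (d k : ℕ) (hd : 2 ≤ d) (hk : 1 ≤ k)
    (σ : {x : Fin k → ZMod d // fibIsVertex d k x} ≃
         {x : Fin k → ZMod d // fibIsVertex d k x})
    (hσ : ∀ x y : {x : Fin k → ZMod d // fibIsVertex d k x},
      fibArc d k x.1 y.1 ↔ fibArc d k (σ x).1 (σ y).1) :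
    ∀ x, σ x = x := by
  haveI : NeZero d := ⟨by omega⟩
  haveI : Fact (1 < d) := ⟨by omega⟩
  have hk0 : 0 < k := hk
  set L : Fin k := ⟨k - 1, Nat.sub_lt hk0 Nat.one_pos⟩ with hLdef
  let M : {x : Fin k → ZMod d // fibIsVertex d k x} → Prop := fun x =>
    ∃ y y' : {z : Fin k → ZMod d // fibIsVertex d k z},
      y ≠ y' ∧ fibArc d k x.1 y.1 ∧ fibArc d k x.1 y'.1
  have hM0 : ∀ x, x.1 L = 0 → M x := by
    intro x hx
    have ht0 : x.1 L ≠ 0 → (0 : ZMod d) = x.1 L + 1 := fun h => absurd hx h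
    have ht1 : x.1 L ≠ 0 → (1 : ZMod d) = x.1 L + 1 := fun h => absurd hx h
    refine ⟨⟨FibAux.app x.1 0, FibAux.app_vertex hk0 x.2 ht0⟩,
      ⟨FibAux.app x.1 1, FibAux.app_vertex hk0 x.2 ht1⟩, ?_, ?_, ?_⟩
    · intro he
      have h2 : FibAux.app x.1 0 ⟨k - 1, Nat.sub_lt hk0 Nat.one_pos⟩
          = FibAux.app x.1 1 ⟨k - 1, Nat.sub_lt hk0 Nat.one_pos⟩ :=
        congrFun (congrArg Subtype.val he) _
      rw [FibAux.app_last x.1 0 hk0, FibAux.app_last x.1 1 hk0] at h2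
      exact one_ne_zero h2.symm
    · exact FibAux.arc_app hk0 x.1 ht0
    · exact FibAux.arc_app hk0 x.1 ht1
  have hM1 : ∀ x, M x → x.1 L = 0 := by
    intro x hm
    obtain ⟨y, y', hne, h1, h2⟩ := hm
    by_contra hx
    exact hne (Subtype.ext (FibAux.out_unique hk0 hx h1 h2))
  have hMσ : ∀ x, M x → M (σ x) := by
    intro x hm
    obtain ⟨y, y', hne, h1, h2⟩ := hm
    exact ⟨σ y, σ y', fun he => hne (σ.injective he), (hσ x y).1 h1, (hσ x y').1 h2⟩
  -- σ preserves the last digit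
  have key : ∀ n : ℕ, ∀ x, x.1 L = -(n : ZMod d) → (σ x).1 L = -(n : ZMod d) := by
    intro n
    induction n with
    | zero =>
      intro x hx
      simp only [Nat.cast_zero, neg_zero] at hx ⊢
      exact hM1 (σ x) (hMσ x (hM0 x hx))
    | succ n ih =>
      intro x hx
      by_cases hz : ((n : ℕ) + 1 : ZMod d) = 0
      · have hx0 : x.1 L = 0 := by
          rw [hx]; push_cast; rw [hz]; exact neg_zero
        have h0 := hM1 (σ x) (hMσ x (hM0 x hx0))
        rw [h0, ← hx, hx0]
      · have hxne : x.1 L ≠ 0 := by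
          rw [hx]; intro h; apply hz; push_cast at h ⊢
          linear_combination -h
        -- the forced successor
        have ht : x.1 L ≠ 0 → x.1 L + 1 = x.1 L + 1 := fun _ => rfl
        let y : {x : Fin k → ZMod d // fibIsVertex d k x} :=
          ⟨FibAux.app x.1 (x.1 L + 1), FibAux.app_vertex hk0 x.2 ht⟩
        have harc : fibArc d k x.1 y.1 := FibAux.arc_app hk0 x.1 ht
        have hyL : y.1 L = -(n : ZMod d) := by
          show FibAux.app x.1 (x.1 L + 1) L = _
          rw [hLdef, FibAux.app_last x.1 _ hk0, ← hLdef, hx]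
          push_cast; ring
        have hσy := ih y hyL
        -- σ x has nonzero last digit
        have hσxne : (σ x).1 L ≠ 0 := by
          intro h0
          have : M (σ x) := hM0 (σ x) h0
          obtain ⟨z, z', hne, h1, h2⟩ := this
          apply hne
          apply σ.symm.injective
          apply Subtype.ext
          refine FibAux.out_unique hk0 hxne ?_ ?_
          · have := (hσ x (σ.symm z)).2
            rw [σ.apply_symm_apply] at this
            exact this h1
          · have := (hσ x (σ.symm z')).2
            rw [σ.apply_symm_apply] at this
            exact this h2
        have harc' : fibArc d k (σ x).1 (σ y).1 := (hσ x y).1 harc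
        have := harc'.2 hk0 hσxne
        rw [← hLdef] at this
        rw [hσy] at this
        have : (σ x).1 L = -(n : ZMod d) - 1 := by linear_combination -this
        rw [this]; push_cast; ring
  have hlast : ∀ x, (σ x).1 L = x.1 L := by
    intro x
    have : x.1 L = -(((- x.1 L).val : ℕ) : ZMod d) := by
      rw [ZMod.natCast_val, ZMod.cast_id]; ring
    rw [key _ x this, ← this]
  -- every vertex has a predecessor
  have hpred : ∀ x : {x : Fin k → ZMod d // fibIsVertex d k x},
      ∃ w : {x : Fin k → ZMod d // fibIsVertex d k x}, fibArc d k w.1 x.1 := by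
    intro x
    let w : Fin k → ZMod d := fun p => if h : 0 < p.1 then x.1 ⟨p.1 - 1, by omega⟩ else 0
    have hw : fibIsVertex d k w := by
      intro i h hne
      by_cases hi : 0 < i
      · have e1 : w ⟨i, Nat.lt_of_succ_lt h⟩ = x.1 ⟨i - 1, by omega⟩ := dif_pos hi
        have e2 : w ⟨i + 1, h⟩ = x.1 ⟨i, by omega⟩ := dif_pos (show 0 < i + 1 by omega)
        rw [e1] at hne ⊢
        rw [e2]
        have hkk : i - 1 + 1 < k := by omega
        have := x.2 (i - 1) hkk
        rw [show (⟨i - 1 + 1, hkk⟩ : Fin k) = ⟨i, by omega⟩ from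
          Fin.ext (show i - 1 + 1 = i by omega)] at this
        exact this hne
      · exfalso
        apply hne
        exact dif_neg (show ¬ 0 < i by omega)
    refine ⟨⟨w, hw⟩, ?_, ?_⟩
    · intro i h
      show x.1 ⟨i, _⟩ = w ⟨i + 1, h⟩
      have : w ⟨i + 1, h⟩ = x.1 ⟨i + 1 - 1, by omega⟩ :=
        dif_pos (show 0 < i + 1 by omega)
      rw [this]
      exact congrArg x.1 (Fin.ext rfl)
    · intro h hne
      have hne' : w ⟨k - 1, Nat.sub_lt h Nat.one_pos⟩ ≠ 0 := hne
      show x.1 _ = w _ + 1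
      by_cases hk1 : 1 < k
      · have e : w ⟨k - 1, Nat.sub_lt h Nat.one_pos⟩ = x.1 ⟨k - 2, by omega⟩ :=
          (dif_pos (show 0 < k - 1 by omega)).trans
            (by congr 1)
        rw [e] at hne' ⊢
        have hkk : k - 2 + 1 < k := by omega
        have h5 := x.2 (k - 2) hkk hne'
        rw [show (⟨k - 2 + 1, hkk⟩ : Fin k) = ⟨k - 1, Nat.sub_lt h Nat.one_pos⟩ from
          Fin.ext (show k - 2 + 1 = k - 1 by omega)] at h5
        exact h5
      · exfalso
        apply hne'
        exact dif_neg (show ¬ 0 < k - 1 by omega)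
  -- positional induction
  have hpos : ∀ j : ℕ, ∀ p : Fin k, p.1 + j = k - 1 → ∀ x, (σ x).1 p = x.1 p := by
    intro j
    induction j with
    | zero =>
      intro p hp x
      have : p = L := Fin.ext (by simp [hLdef]; omega)
      rw [this]; exact hlast x
    | succ j ih =>
      intro p hp x
      have hp1 : p.1 + 1 < k := by omega
      obtain ⟨w, hw⟩ := hpred x
      have hw' : fibArc d k (σ w).1 (σ x).1 := (hσ w x).1 hw
      have e1 := hw.1 p.1 hp1
      have e2 := hw'.1 p.1 hp1
      have ep : p = ⟨p.1, Nat.lt_of_succ_lt hp1⟩ := Fin.ext rfl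
      rw [ep, e1, e2]
      exact ih ⟨p.1 + 1, hp1⟩ (by simp; omega) w
  intro x
  apply Subtype.ext
  funext p
  exact hpos (k - 1 - p.1) p (by have := p.2; omega) x
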